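/- The formal power series K(z) = Σ_{n≥0} κ(n) z^n satisfies the Mahler-type functional equation K(z) − (Σ_{a=0}^{k−1} (a+1) z^a)·K(z^k) − (Σ_{a=0}^{k²−1} z^a)·K(z^{k²}) = −Σ_{n=0}^{k−1} z^n. -/

import Mathlib

open Matrix

/-- The matrix `A_i = [[i+1,1],[1,0]]`. -/
def A (i : ℕ) : Matrix (Fin 2) (Fin 2) ℤ := !![(i : ℤ) + 1, 1; 1, 0]

/-- `κ(n) = [1,0]·A_{i₀}·A_{i₁}···A_{i_s}·[1,0]^T` where `i_s⋯i₁i₀` is the base-`k`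
expansion of `n` (`Nat.digits k n = [i₀, i₁, …, i_s]`), i.e. the `(0,0)` entry of the
product of the `A_i` taken with digits in order of increasing significance. -/
def kap (k n : ℕ) : ℤ :=
  ((Nat.digits k n).foldr (fun i M => A i * M) (1 : Matrix (Fin 2) (Fin 2) ℤ)) 0 0

lemma kap_zero (k : ℕ) : kap k 0 = 1 := by
  simp [kap, Matrix.one_apply]

lemma mulA00 (i : ℕ) (M : Matrix (Fin 2) (Fin 2) ℤ) :
    (A i * M) 0 0 = ((i : ℤ) + 1) * M 0 0 + M 1 0 := by
  simp [A, Matrix.mul_apply, Fin.sum_univ_two]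

lemma fold10 (k m : ℕ) (hk : 2 ≤ k) (hm : 0 < m) :
    ((Nat.digits k m).foldr (fun i M => A i * M) (1 : Matrix (Fin 2) (Fin 2) ℤ)) 1 0
      = kap k (m / k) := by
  rw [Nat.digits_def' (by omega : 1 < k) hm, List.foldr_cons]
  simp [kap, A, Matrix.mul_apply, Fin.sum_univ_two]

lemma kap_rec (k n : ℕ) (hk : 2 ≤ k) (hn : k ≤ n) :
    kap k n = ((n % k : ℕ) + 1 : ℤ) * kap k (n / k) + kap k (n / k / k) := by
  have h1 : 0 < n := by omega
  have h2 : 0 < n / k := Nat.div_pos hn (by omega)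
  conv_lhs => rw [kap, Nat.digits_def' (by omega : 1 < k) h1, List.foldr_cons, mulA00,
    fold10 k (n / k) hk h2]
  rfl

lemma kap_small (k n : ℕ) (hk : 2 ≤ k) (hp : 0 < n) (hn : n < k) :
    kap k n = (n : ℤ) + 1 := by
  rw [kap, Nat.digits_def' (by omega : 1 < k) hp, Nat.mod_eq_of_lt hn,
    Nat.div_eq_of_lt hn]
  simp [A, Matrix.mul_apply, Fin.sum_univ_two, Matrix.one_apply]

lemma kap_key (k n : ℕ) (hk : 2 ≤ k) :
    kap k n - ((n % k : ℕ) + 1 : ℤ) * kap k (n / k) - kap k (n / k / k)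
      = if n < k then -1 else 0 := by
  by_cases hn : n < k
  · have h0 : n / k = 0 := Nat.div_eq_of_lt hn
    have hm : n % k = n := Nat.mod_eq_of_lt hn
    rw [if_pos hn, h0, hm]
    rcases Nat.eq_zero_or_pos n with rfl | hp
    · simp [kap_zero]
    · rw [kap_small k n hk hp hn, kap_zero, Nat.zero_div, kap_zero]; ring
  · rw [if_neg hn, kap_rec k n hk (le_of_not_gt hn)]; ring


open PowerSeries in
/-- The Mahler functional equation
`K(z) − (Σ_{a<k}(a+1)z^a)·K(z^k) − (Σ_{a<k²}z^a)·K(z^{k²}) = −Σ_{n<k} z^n`,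
where `K(z) = Σ κ(n) z^n` and `K(z^{k})`, `K(z^{k²})` are the formal substitutions,
whose `n`-th coefficient is `κ(n/k^j)` if `k^j ∣ n` and `0` otherwise. -/
theorem stmt4 (k : ℕ) (hk : 2 ≤ k) :
    (PowerSeries.mk fun n => kap k n)
      - (∑ a ∈ Finset.range k, PowerSeries.C ((a : ℤ) + 1) * (PowerSeries.X : ℤ⟦X⟧) ^ a)
          * (PowerSeries.mk fun n => if k ∣ n then kap k (n / k) else 0)
      - (∑ a ∈ Finset.range (k ^ 2), (PowerSeries.X : ℤ⟦X⟧) ^ a)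
          * (PowerSeries.mk fun n => if k ^ 2 ∣ n then kap k (n / k ^ 2) else 0)
    = -∑ n ∈ Finset.range k, (PowerSeries.X : ℤ⟦X⟧) ^ n := by
  have hk0 : 0 < k := by omega
  ext n
  have h1 : (coeff n)
      ((∑ a ∈ Finset.range k, PowerSeries.C ((a : ℤ) + 1) * (PowerSeries.X : ℤ⟦X⟧) ^ a)
        * (PowerSeries.mk fun n => if k ∣ n then kap k (n / k) else 0))
      = ((n % k : ℕ) + 1 : ℤ) * kap k (n / k) := by
    rw [Finset.sum_mul, map_sum]
    rw [Finset.sum_eq_single (n % k)]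
    · rw [mul_assoc, coeff_C_mul, coeff_X_pow_mul', if_pos (Nat.mod_le n k), coeff_mk]
      have hsub : n - n % k = k * (n / k) :=
        Nat.sub_eq_of_eq_add (by rw [Nat.div_add_mod])
      rw [hsub, if_pos (Dvd.intro _ rfl), Nat.mul_div_cancel_left _ hk0]
    · intro a ha hne
      rw [mul_assoc, coeff_C_mul, coeff_X_pow_mul', coeff_mk]
      have halt : a < k := Finset.mem_range.mp ha
      split_ifs with h1 h2
      · exfalso
        apply hne
        have : a ≡ n [MOD k] := (Nat.modEq_iff_dvd' h1).mpr h2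
        calc a = a % k := (Nat.mod_eq_of_lt halt).symm
          _ = n % k := this
      · ring
      · ring
    · intro h
      exact absurd (Finset.mem_range.mpr (Nat.mod_lt n hk0)) h
  have hk20 : 0 < k ^ 2 := by positivity
  have h2 : (coeff n)
      ((∑ a ∈ Finset.range (k ^ 2), (PowerSeries.X : ℤ⟦X⟧) ^ a)
        * (PowerSeries.mk fun n => if k ^ 2 ∣ n then kap k (n / k ^ 2) else 0))
      = kap k (n / k / k) := by
    rw [Finset.sum_mul, map_sum]
    rw [Finset.sum_eq_single (n % k ^ 2)]
    · rw [coeff_X_pow_mul', if_pos (Nat.mod_le n _), coeff_mk]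
      have hsub : n - n % k ^ 2 = k ^ 2 * (n / k ^ 2) :=
        Nat.sub_eq_of_eq_add (by rw [Nat.div_add_mod])
      rw [hsub, if_pos (Dvd.intro _ rfl), Nat.mul_div_cancel_left _ hk20,
        Nat.div_div_eq_div_mul, ← pow_two]
    · intro a ha hne
      rw [coeff_X_pow_mul', coeff_mk]
      have halt : a < k ^ 2 := Finset.mem_range.mp ha
      split_ifs with h1 h2
      · exfalso
        apply hne
        have : a ≡ n [MOD k ^ 2] := (Nat.modEq_iff_dvd' h1).mpr h2
        calc a = a % k ^ 2 := (Nat.mod_eq_of_lt halt).symm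
          _ = n % k ^ 2 := this
      · rfl
      · rfl
    · intro h
      exact absurd (Finset.mem_range.mpr (Nat.mod_lt n hk20)) h
  rw [map_sub, map_sub, h1, h2, coeff_mk, map_neg, map_sum]
  have h3 : ∑ a ∈ Finset.range k, (coeff n) ((PowerSeries.X : ℤ⟦X⟧) ^ a)
      = if n < k then 1 else 0 := by
    simp only [coeff_X_pow]
    rw [Finset.sum_ite_eq]
    simp [Finset.mem_range]
  rw [h3, kap_key k n hk]
  split_ifs <;> ring
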